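/- Let X̂_j = H R_j Tᵀ with R_j diagonal for j = 1,…,J. Then (1/(2√J)) Σ_{j=1}^{J}(‖H R_j‖_F² + ‖T‖_F²) ≥ ‖X̂‖_*, where X̂ is the tensor with frontal slices X̂_j and ‖·‖_* is the tensor nuclear 2-norm. -/

import Mathlib

/-- The set of values `∑ ‖u_i‖‖v_i‖‖w_i‖` over finite rank-one decompositions of `A`. -/
def decompSums (n1 n2 n3 : ℕ) (A : Fin n1 → Fin n2 → Fin n3 → ℝ) : Set ℝ :=
  {s | ∃ (m : ℕ) (u : Fin m → EuclideanSpace ℝ (Fin n1))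
        (v : Fin m → EuclideanSpace ℝ (Fin n2))
        (w : Fin m → EuclideanSpace ℝ (Fin n3)),
      (∀ i j k, A i j k = ∑ d, u d i * v d j * w d k) ∧
      s = ∑ d, ‖u d‖ * ‖v d‖ * ‖w d‖}

/-- The tensor nuclear 2-norm. -/
noncomputable def nuclear2 (n1 n2 n3 : ℕ) (A : Fin n1 → Fin n2 → Fin n3 → ℝ) : ℝ :=
  sInf (decompSums n1 n2 n3 A)

/-- Squared Frobenius norm. -/
def frob2 {m n : ℕ} (M : Matrix (Fin m) (Fin n) ℝ) : ℝ :=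
  ∑ i, ∑ j, (M i j) ^ 2

theorem stmt_10 (I J K D : ℕ)
    (H : Matrix (Fin I) (Fin D) ℝ) (T : Matrix (Fin K) (Fin D) ℝ)
    (r : Fin J → Fin D → ℝ)
    (X : Fin I → Fin J → Fin K → ℝ)
    (hX : ∀ i j k, X i j k = (H * Matrix.diagonal (r j) * Matrix.transpose T) i k) :
    (1 / (2 * Real.sqrt J)) *
        ∑ j, (frob2 (H * Matrix.diagonal (r j)) + frob2 T) ≥
      nuclear2 I J K X := by
  classical
  have hX' : ∀ i j k, X i j k = ∑ d, H i d * r j d * T k d := by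
    intro i j k
    rw [hX, Matrix.mul_apply]
    refine Finset.sum_congr rfl fun d _ => ?_
    rw [Matrix.mul_diagonal, Matrix.transpose_apply]
  set a : Fin D → ℝ := fun d => Real.sqrt (∑ i, (H i d)^2) with ha
  set b : Fin D → ℝ := fun d => Real.sqrt (∑ j, (r j d)^2) with hb
  set c : Fin D → ℝ := fun d => Real.sqrt (∑ k, (T k d)^2) with hc
  have ha2 : ∀ d, (a d)^2 = ∑ i, (H i d)^2 := fun d =>
    Real.sq_sqrt (Finset.sum_nonneg fun _ _ => sq_nonneg _)
  have hb2 : ∀ d, (b d)^2 = ∑ j, (r j d)^2 := fun d =>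
    Real.sq_sqrt (Finset.sum_nonneg fun _ _ => sq_nonneg _)
  have hc2 : ∀ d, (c d)^2 = ∑ k, (T k d)^2 := fun d =>
    Real.sq_sqrt (Finset.sum_nonneg fun _ _ => sq_nonneg _)
  have hbdd : BddBelow (decompSums I J K X) := by
    refine ⟨0, ?_⟩
    rintro s ⟨m, u, v, w, -, rfl⟩
    positivity
  have hmem : (∑ d, a d * b d * c d) ∈ decompSums I J K X := by
    refine ⟨D, (fun d => (WithLp.toLp 2 (fun i => H i d) : EuclideanSpace ℝ (Fin I))),
      (fun d => (WithLp.toLp 2 (fun j => r j d) : EuclideanSpace ℝ (Fin J))),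
      (fun d => (WithLp.toLp 2 (fun k => T k d) : EuclideanSpace ℝ (Fin K))), fun i j k => hX' i j k, ?_⟩
    refine Finset.sum_congr rfl fun d _ => ?_
    rw [EuclideanSpace.norm_eq, EuclideanSpace.norm_eq, EuclideanSpace.norm_eq]
    simp only [Real.norm_eq_abs, sq_abs, PiLp.toLp_apply]
    rfl
  have h1 : nuclear2 I J K X ≤ ∑ d, a d * b d * c d := csInf_le hbdd hmem
  have hsum : (∑ j, (frob2 (H * Matrix.diagonal (r j)) + frob2 T)) =
      ∑ d, ((a d)^2 * (b d)^2 + (J : ℝ) * (c d)^2) := by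
    rw [Finset.sum_add_distrib]
    have e1 : (∑ j, frob2 (H * Matrix.diagonal (r j))) = ∑ d, (a d)^2 * (b d)^2 := by
      have e0 : ∀ j, frob2 (H * Matrix.diagonal (r j))
          = ∑ d, (∑ i, (H i d)^2) * (r j d)^2 := by
        intro j
        simp only [frob2, Matrix.mul_diagonal, mul_pow]
        rw [Finset.sum_comm]
        exact Finset.sum_congr rfl fun d _ => (Finset.sum_mul _ _ _).symm
      simp only [e0]
      rw [Finset.sum_comm]
      refine Finset.sum_congr rfl fun d _ => ?_
      rw [ha2, hb2, Finset.mul_sum]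
    have e2 : (∑ _j : Fin J, frob2 T) = ∑ d, (J : ℝ) * (c d)^2 := by
      simp only [hc2, frob2, Finset.sum_const, Finset.card_fin, nsmul_eq_mul,
        Finset.mul_sum]
      rw [Finset.sum_comm]
    rw [e1, e2, ← Finset.sum_add_distrib]
  rw [hsum]
  refine le_trans h1 ?_
  rw [Finset.mul_sum]
  refine Finset.sum_le_sum fun d _ => ?_
  have han : 0 ≤ a d := Real.sqrt_nonneg _
  have hbn : 0 ≤ b d := Real.sqrt_nonneg _
  have hcn : 0 ≤ c d := Real.sqrt_nonneg _
  rcases Nat.eq_zero_or_pos J with hJ | hJ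
  · subst hJ
    have : b d = 0 := by simp [hb]
    simp [this]
  · have hJ0 : (0:ℝ) < Real.sqrt J := Real.sqrt_pos.mpr (by exact_mod_cast hJ)
    have hsq : (Real.sqrt J)^2 = (J:ℝ) := Real.sq_sqrt (by positivity)
    rw [div_mul_eq_mul_div, one_mul, le_div_iff₀ (by positivity)]
    nlinarith [sq_nonneg (a d * b d - Real.sqrt J * c d),
      mul_nonneg (mul_nonneg han hbn) hcn, hJ0.le]
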